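/- For 0 < a < b, ∫₀¹ σ · P₁(σ) dσ ≤ π/(2b³), where P₁(σ) = (2abπ)/(4(b²−a²)³) · [4/√(σ²+b²) − 4/√(σ²+a²) + (b²−a²)(1/(σ²+a²)^{3/2} + 1/(σ²+b²)^{3/2})]. -/

import Mathlib

open Real

/-- The explicit function P₁. -/
noncomputable def P₁ (a b σ : ℝ) : ℝ :=
  (2 * a * b * Real.pi) / (4 * (b^2 - a^2)^3) *
    (4 / Real.sqrt (σ^2 + b^2) - 4 / Real.sqrt (σ^2 + a^2)
      + (b^2 - a^2) * (1 / (σ^2 + a^2) ^ ((3:ℝ)/2) + 1 / (σ^2 + b^2) ^ ((3:ℝ)/2)))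

lemma rpow_three_half (x : ℝ) (hx : 0 < x) : x ^ ((3:ℝ)/2) = x * Real.sqrt x := by
  rw [show (3:ℝ)/2 = 1 + 1/2 by norm_num, Real.rpow_add hx, Real.rpow_one,
    Real.sqrt_eq_rpow]

lemma sqrt_hasDeriv (c σ : ℝ) (hc : 0 < c) :
    HasDerivAt (fun x : ℝ => Real.sqrt (x^2 + c^2)) (σ / Real.sqrt (σ^2 + c^2)) σ := by
  have hpos : 0 < σ^2 + c^2 := by positivity
  have h0 : HasDerivAt (fun x : ℝ => x^2 + c^2) (2*σ) σ := by
    simpa using (hasDerivAt_pow 2 σ).add_const (c^2)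
  have := h0.sqrt (ne_of_gt hpos)
  convert this using 1
  have hs : Real.sqrt (σ^2 + c^2) ≠ 0 := by positivity
  field_simp

lemma inv_sqrt_hasDeriv (c σ : ℝ) (hc : 0 < c) :
    HasDerivAt (fun x : ℝ => (Real.sqrt (x^2 + c^2))⁻¹)
      (-(σ / (σ^2 + c^2) ^ ((3:ℝ)/2))) σ := by
  have hpos : 0 < σ^2 + c^2 := by positivity
  have hs : 0 < Real.sqrt (σ^2 + c^2) := Real.sqrt_pos.mpr hpos
  have := (sqrt_hasDeriv c σ hc).inv (ne_of_gt hs)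
  refine this.congr_deriv ?_
  have h2 : Real.sqrt (σ^2 + c^2) ^ 2 = σ^2 + c^2 := Real.sq_sqrt hpos.le
  rw [rpow_three_half _ hpos, neg_div, div_div, h2]
  ring

set_option maxHeartbeats 1000000 in
theorem stmt_8 (a b : ℝ) (ha : 0 < a) (hab : a < b) :
    (∫ σ in (0:ℝ)..1, σ * P₁ a b σ) ≤ Real.pi / (2 * b^3) := by
  have hb : (0:ℝ) < b := ha.trans hab
  set C : ℝ := (2 * a * b * Real.pi) / (4 * (b^2 - a^2)^3) with hC
  set F : ℝ → ℝ := fun σ => C * (4 * Real.sqrt (σ^2 + b^2) - 4 * Real.sqrt (σ^2 + a^2)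
      - (b^2 - a^2) * ((Real.sqrt (σ^2 + a^2))⁻¹ + (Real.sqrt (σ^2 + b^2))⁻¹)) with hF
  -- derivative
  have hderiv : ∀ σ : ℝ, HasDerivAt F (σ * P₁ a b σ) σ := by
    intro σ
    rw [hF]
    have h1 := sqrt_hasDeriv b σ hb
    have h2 := sqrt_hasDeriv a σ ha
    have h3 := inv_sqrt_hasDeriv a σ ha
    have h4 := inv_sqrt_hasDeriv b σ hb
    have := ((((h1.const_mul 4).sub (h2.const_mul 4)).sub
      ((h3.add h4).const_mul (b^2 - a^2))).const_mul C)
    refine this.congr_deriv ?_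
    unfold P₁
    rw [← hC]
    ring
  -- integrability
  have hcontA : Continuous fun σ : ℝ => Real.sqrt (σ^2 + a^2) :=
    ((continuous_pow 2).add continuous_const).sqrt
  have hcontB : Continuous fun σ : ℝ => Real.sqrt (σ^2 + b^2) :=
    ((continuous_pow 2).add continuous_const).sqrt
  have hcontA3 : Continuous fun σ : ℝ => (σ^2 + a^2) ^ ((3:ℝ)/2) :=
    ((continuous_pow 2).add continuous_const).rpow_const (fun x => Or.inr (by norm_num))
  have hcontB3 : Continuous fun σ : ℝ => (σ^2 + b^2) ^ ((3:ℝ)/2) :=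
    ((continuous_pow 2).add continuous_const).rpow_const (fun x => Or.inr (by norm_num))
  have hneA : ∀ σ : ℝ, Real.sqrt (σ^2 + a^2) ≠ 0 := fun σ => by positivity
  have hneB : ∀ σ : ℝ, Real.sqrt (σ^2 + b^2) ≠ 0 := fun σ => by positivity
  have hneA3 : ∀ σ : ℝ, (σ^2 + a^2) ^ ((3:ℝ)/2) ≠ 0 := fun σ => by positivity
  have hneB3 : ∀ σ : ℝ, (σ^2 + b^2) ^ ((3:ℝ)/2) ≠ 0 := fun σ => by positivity
  have hcont : Continuous fun σ : ℝ => σ * P₁ a b σ := by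
    unfold P₁
    exact continuous_id.mul (continuous_const.mul
      ((((continuous_const.div hcontB hneB).sub (continuous_const.div hcontA hneA)).add
        (continuous_const.mul ((continuous_const.div hcontA3 hneA3).add
          (continuous_const.div hcontB3 hneB3))))))
  have hint : IntervalIntegrable (fun σ => σ * P₁ a b σ) MeasureTheory.volume 0 1 :=
    hcont.intervalIntegrable 0 1
  have hval : (∫ σ in (0:ℝ)..1, σ * P₁ a b σ) = F 1 - F 0 :=
    intervalIntegral.integral_eq_sub_of_hasDerivAt (fun σ _ => hderiv σ) hint
  rw [hval]
  -- evaluate endpoints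
  set u : ℝ := Real.sqrt (1 + a^2) with hu
  set v : ℝ := Real.sqrt (1 + b^2) with hv
  have hu2 : u^2 = 1 + a^2 := Real.sq_sqrt (by positivity)
  have hv2 : v^2 = 1 + b^2 := Real.sq_sqrt (by positivity)
  have hu0 : 0 < u := Real.sqrt_pos.mpr (by positivity)
  have hv0 : 0 < v := Real.sqrt_pos.mpr (by positivity)
  have hF1 : F 1 = C * (4 * v - 4 * u - (b^2 - a^2) * (u⁻¹ + v⁻¹)) := by
    simp only [hF]
    norm_num [hu, hv, add_comm]
  have hF0 : F 0 = C * (4 * b - 4 * a - (b^2 - a^2) * (a⁻¹ + b⁻¹)) := by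
    simp only [hF]
    norm_num [Real.sqrt_sq ha.le, Real.sqrt_sq hb.le]
  rw [hF1, hF0]
  -- key inequality
  have hba : (0:ℝ) < b^2 - a^2 := by nlinarith
  have hkey : b^3 * (4*(v-b-u+a)*(a*u*b*v) + (b^2-a^2)*(b*v*(u-a) + a*u*(v-b)))
      ≤ (b^2-a^2)^3 * (u*v) := by
    have hid : ((b^2-a^2)^3*(u*v) - b^3 * (4*(v-b-u+a)*(a*u*b*v)
          + (b^2-a^2)*(b*v*(u-a) + a*u*(v-b)))) * (u+v)
        = a*(b^4*(b^2-a^2)*(v-u)^2 + u*v*(u+v)*(b-a)^2*(3*b^3-a^3-2*a^2*b)) := by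
      linear_combination (4*a*b^4*u*v)*hu2 - (4*a*b^4*u*v)*hv2
    have h3 : 0 ≤ 3*b^3-a^3-2*a^2*b := by nlinarith [mul_pos ha hb]
    have hpos : 0 ≤ a*(b^4*(b^2-a^2)*(v-u)^2 + u*v*(u+v)*(b-a)^2*(3*b^3-a^3-2*a^2*b)) := by
      have h1 : (0:ℝ) ≤ b^4*(b^2-a^2)*(v-u)^2 := by positivity
      have h2 : (0:ℝ) ≤ u*v*(u+v)*(b-a)^2*(3*b^3-a^3-2*a^2*b) := by positivity
      positivity
    nlinarith [hid, hpos, add_pos hu0 hv0]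
  -- assemble
  have hπ : (0:ℝ) < Real.pi := Real.pi_pos
  have hEq : C * (4 * v - 4 * u - (b^2 - a^2) * (u⁻¹ + v⁻¹))
      - C * (4 * b - 4 * a - (b^2 - a^2) * (a⁻¹ + b⁻¹))
      = (2 * a * b * Real.pi * (4*(v-b-u+a)*(a*u*b*v) + (b^2-a^2)*(b*v*(u-a) + a*u*(v-b))))
        / (4 * (b^2 - a^2)^3 * (a*u*b*v)) := by
    rw [hC]
    field_simp
    ring
  rw [hEq, div_le_div_iff₀ (by positivity) (by positivity)]
  have := mul_le_mul_of_nonneg_left hkey (show (0:ℝ) ≤ 4*a*b*Real.pi by positivity)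
  linarith [this]
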